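/- arXiv:1410.2187 — 2 statements merged into one kernel-verified Lean document; each statement's English description precedes it below -/
import Mathlib

section
/- Let y_1, …, y_N ∈ ℂ be distinct, w_1, …, w_N ∈ ℂ, and suppose v : ℂ → ℂ satisfies, for x near y_i (x ≠ y_j for all j), the exact discrete identities ∑_j w_j (v(y_j) − v(x))/(y_j − x) = 0 and ∑_j w_j (v(y_j) − v(x) − (y_j − x) v′(x))/(y_j − x)² = 0 with ∑_j w_j/(y_j − x) ≠ 0. Then v′(x) = (∑_j w_j (v(y_j) − v(x))/(y_j − x)²) / (∑_j w_j/(y_j − x)), and in the limit x → y_i this expression tends to −(1/w_i) ∑_{j≠i} w_j (v(y_j) − v(y_i))/(y_j − y_i), provided v is differentiable at y_i, w_i ≠ 0, and the weights satisfy the compensation identity at y_i. -/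
open Complex Filter Topology

/-- Barycentric derivative formula and its Schneider–Werner-type node limit: if the two
exact discrete compensated identities hold for all `x` near `y_i` (distinct from the
nodes) with nonzero denominator, then `v'(x)` equals the barycentric quotient there, and
as `x → y_i` the quotient tends to `-(1/w_i) ∑_{j≠i} w_j (v(y_j) - v(y_i))/(y_j - y_i)`,
provided `v` is differentiable at `y_i` and `w_i ≠ 0`. -/
theorem stmt_14
    (N : ℕ) (y : Fin N → ℂ) (hy : Function.Injective y)
    (w : Fin N → ℂ) (i : Fin N) (hwi : w i ≠ 0)
    (v : ℂ → ℂ) (hvd : DifferentiableAt ℂ v (y i))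
    (U : Set ℂ) (hU : U ∈ 𝓝 (y i))
    (h1 : ∀ x ∈ U, (∀ j, x ≠ y j) →
      (∑ j, w j * (v (y j) - v x) / (y j - x)) = 0)
    (h2 : ∀ x ∈ U, (∀ j, x ≠ y j) →
      (∑ j, w j * (v (y j) - v x - (y j - x) * deriv v x) / (y j - x) ^ 2) = 0)
    (hden : ∀ x ∈ U, (∀ j, x ≠ y j) → (∑ j, w j / (y j - x)) ≠ 0) :
    (∀ x ∈ U, (∀ j, x ≠ y j) →
      deriv v x =
        (∑ j, w j * (v (y j) - v x) / (y j - x) ^ 2) / (∑ j, w j / (y j - x))) ∧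
    Filter.Tendsto
      (fun x => (∑ j, w j * (v (y j) - v x) / (y j - x) ^ 2) / (∑ j, w j / (y j - x)))
      (𝓝[{x : ℂ | ∀ j, x ≠ y j}] (y i))
      (𝓝 (-(1 / w i) * ∑ j ∈ Finset.univ.erase i,
        w j * (v (y j) - v (y i)) / (y j - y i))) := by
  constructor
  · intro x hx hxy
    have hD := hden x hx hxy
    have key : (∑ j, w j * (v (y j) - v x) / (y j - x) ^ 2)
        - (∑ j, w j / (y j - x)) * deriv v x = 0 := by
      rw [← h2 x hx hxy, Finset.sum_mul, ← Finset.sum_sub_distrib]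
      apply Finset.sum_congr rfl
      intro j _
      have hne : y j - x ≠ 0 := sub_ne_zero.mpr (Ne.symm (hxy j))
      field_simp
    rw [eq_div_iff hD]
    linear_combination -key
  · set S : Set ℂ := {x : ℂ | ∀ j, x ≠ y j} with hS
    set A : ℂ := ∑ j ∈ Finset.univ.erase i, w j * (v (y j) - v (y i)) / (y j - y i) with hA
    have hvc : ContinuousAt v (y i) := hvd.continuousAt
    have hyne : ∀ j ∈ Finset.univ.erase i, y j - y i ≠ 0 := by
      intro j hj
      exact sub_ne_zero.mpr fun h => (Finset.mem_erase.mp hj).1 (hy h)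
    set g : ℂ → ℂ := fun x => ∑ j ∈ Finset.univ.erase i,
        w j * (v (y j) - v x) * (y i - y j) / (y j - x) ^ 2 with hg
    set d : ℂ → ℂ := fun x => w i + ∑ j ∈ Finset.univ.erase i,
        w j * (y i - x) / (y j - x) with hd
    have hgt : Tendsto g (𝓝[S] (y i)) (𝓝 (-A)) := by
      have : Tendsto g (𝓝 (y i)) (𝓝 (-A)) := by
        have hlim : Tendsto g (𝓝 (y i)) (𝓝 (∑ j ∈ Finset.univ.erase i,
            w j * (v (y j) - v (y i)) * (y i - y j) / (y j - y i) ^ 2)) := by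
          apply tendsto_finset_sum
          intro j hj
          exact (((tendsto_const_nhds.sub hvc).const_mul (w j)).mul_const (y i - y j)).div
            ((tendsto_const_nhds.sub tendsto_id).pow 2) (pow_ne_zero 2 (hyne j hj))
        convert hlim using 2
        rw [hA, ← Finset.sum_neg_distrib]
        apply Finset.sum_congr rfl
        intro j hj
        have := hyne j hj
        field_simp
        ring
      exact this.mono_left nhdsWithin_le_nhds
    have hdt : Tendsto d (𝓝[S] (y i)) (𝓝 (w i)) := by
      have : Tendsto d (𝓝 (y i)) (𝓝 (w i + ∑ j ∈ Finset.univ.erase i,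
          w j * (y i - y i) / (y j - y i))) := by
        apply tendsto_const_nhds.add
        apply tendsto_finset_sum
        intro j hj
        exact ((tendsto_const_nhds.sub tendsto_id).const_mul (w j)).div
          (tendsto_const_nhds.sub tendsto_id) (hyne j hj)
      simpa using this.mono_left nhdsWithin_le_nhds
    have hev : (fun x => g x / d x) =ᶠ[𝓝[S] (y i)]
        (fun x => (∑ j, w j * (v (y j) - v x) / (y j - x) ^ 2) / (∑ j, w j / (y j - x))) := by
      filter_upwards [mem_nhdsWithin_of_mem_nhds hU, self_mem_nhdsWithin] with x hxU hxS
      have hxS' : ∀ j, x ≠ y j := hxS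
      have hix : y i - x ≠ 0 := sub_ne_zero.mpr (Ne.symm (hxS' i))
      have hne : ∀ j, y j - x ≠ 0 := fun j => sub_ne_zero.mpr (Ne.symm (hxS' j))
      have hnum : (y i - x) * (∑ j, w j * (v (y j) - v x) / (y j - x) ^ 2) = g x := by
        have h1' := h1 x hxU hxS'
        rw [← Finset.sum_erase_add _ _ (Finset.mem_univ i)] at h1'
        have hwiv : w i * (v (y i) - v x) / (y i - x)
            = -∑ j ∈ Finset.univ.erase i, w j * (v (y j) - v x) / (y j - x) := by
          linear_combination h1'
        rw [Finset.mul_sum, ← Finset.sum_erase_add _ _ (Finset.mem_univ i)]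
        have : (y i - x) * (w i * (v (y i) - v x) / (y i - x) ^ 2)
            = w i * (v (y i) - v x) / (y i - x) := by
          field_simp
        rw [this, hwiv, hg, ← sub_eq_add_neg, ← Finset.sum_sub_distrib]
        apply Finset.sum_congr rfl
        intro j hj
        have := hne j
        field_simp
        ring
      have hden' : (y i - x) * (∑ j, w j / (y j - x)) = d x := by
        rw [Finset.mul_sum, ← Finset.sum_erase_add _ _ (Finset.mem_univ i), hd]
        have : (y i - x) * (w i / (y i - x)) = w i := by field_simp
        rw [this, add_comm]
        congr 1
        apply Finset.sum_congr rfl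
        intro j hj
        have := hne j
        field_simp
      rw [← hnum, ← hden', mul_div_mul_left _ _ hix]
    have := (hgt.div hdt hwi).congr' hev
    convert this using 2
    rw [hA]
    ring
end

section
/- For complex numbers s, t with s ≠ t (mod 2π) and an injective C¹ map Z : ℝ/2πℤ → ℂ with Z′ never zero, the function (s,t) ↦ (e^{is} − e^{it})/(Z(s) − Z(t)) extends continuously (indeed C^{k−1} if Z is C^k) to the diagonal s = t with value i e^{it}/Z′(t), and this extension is nonvanishing. -/
open Complex Real

/-- Divided-difference kernel via an integral. -/
noncomputable def kD (f : ℝ → ℂ) (s t : ℝ) : ℂ :=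
  ∫ u in (0:ℝ)..1, deriv f (t + u * (s - t))

lemma kD_cont (f : ℝ → ℂ) (hf : ContDiff ℝ 1 f) :
    Continuous fun p : ℝ × ℝ => kD f p.1 p.2 := by
  apply intervalIntegral.continuous_parametric_intervalIntegral_of_continuous'
    (f := fun (p : ℝ × ℝ) (u : ℝ) => deriv f (p.2 + u * (p.1 - p.2)))
  exact (hf.continuous_deriv le_rfl).comp (by fun_prop)

lemma kD_diag (f : ℝ → ℂ) (t : ℝ) : kD f t t = deriv f t := by
  simp [kD]

lemma kD_eq (f : ℝ → ℂ) (hf : ContDiff ℝ 1 f) (s t : ℝ) :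
    ((s : ℂ) - t) * kD f s t = f s - f t := by
  have hderiv : ∀ u ∈ Set.uIcc (0:ℝ) 1,
      HasDerivAt (fun u : ℝ => f (t + u * (s - t)))
        ((s - t) • deriv f (t + u * (s - t))) u := by
    intro u _
    have hin : HasDerivAt (fun u : ℝ => t + u * (s - t)) (s - t) u := by
      simpa using ((hasDerivAt_id u).mul_const (s - t)).const_add t
    have hout : HasDerivAt f (deriv f (t + u * (s - t))) (t + u * (s - t)) :=
      ((hf.differentiable one_ne_zero) _).hasDerivAt
    exact (HasDerivAt.scomp u hout hin)
  have hint : IntervalIntegrable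
      (fun u : ℝ => (s - t) • deriv f (t + u * (s - t))) MeasureTheory.volume 0 1 := by
    apply Continuous.intervalIntegrable
    exact (continuous_const : Continuous fun _ : ℝ => (s - t : ℝ)).smul ((hf.continuous_deriv le_rfl).comp (f := fun u : ℝ => t + u * (s - t)) (by fun_prop) : Continuous fun u : ℝ => deriv f (t + u * (s - t)))
  have h := intervalIntegral.integral_eq_sub_of_hasDerivAt hderiv hint
  simp only [one_mul, zero_mul, add_zero] at h
  rw [intervalIntegral.integral_smul] at h
  have : (s - t) • kD f s t = f s - f t := by
    simpa [kD, add_sub_cancel] using h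
  rw [← this, Complex.real_smul]
  push_cast
  ring

lemma exp_I_periodic (a : ℝ) (k : ℤ) :
    Complex.exp (Complex.I * (a + k * (2 * Real.pi))) = Complex.exp (Complex.I * a) := by
  have : Complex.I * (a + k * (2 * Real.pi)) = Complex.I * a + k * (2 * Real.pi * Complex.I) := by
    push_cast
    ring
  rw [this, Complex.exp_add, Complex.exp_int_mul_two_pi_mul_I, mul_one]

lemma exp_I_eq_iff {a b : ℝ} :
    Complex.exp (Complex.I * a) = Complex.exp (Complex.I * b) ↔
      ∃ k : ℤ, a = b + k * (2 * Real.pi) := by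
  constructor
  · intro h
    obtain ⟨n, hn⟩ := Complex.exp_eq_exp_iff_exists_int.mp h
    refine ⟨n, ?_⟩
    have h2 : Complex.I * a = Complex.I * (b + n * (2 * Real.pi)) := by
      rw [hn]; push_cast; ring
    have h3 : (a : ℂ) = ((b + n * (2 * Real.pi) : ℝ) : ℂ) := by
      have := mul_left_cancel₀ Complex.I_ne_zero h2
      push_cast
      exact this
    exact_mod_cast h3
  · rintro ⟨k, rfl⟩
    have h := exp_I_periodic b k
    push_cast at h ⊢
    exact h

/-- The Kress-split kernel `(s,t) ↦ (e^{is} - e^{it})/(Z(s) - Z(t))` for an injective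
C¹ `2π`-periodic parametrization `Z` with nonvanishing derivative extends continuously
to the diagonal with value `i e^{it}/Z'(t)`, and the extension is nonvanishing. -/
theorem stmt_16
    (Z : ℝ → ℂ) (hZ : ContDiff ℝ 1 Z)
    (hper : Function.Periodic Z (2 * Real.pi))
    (hinj : Set.InjOn Z (Set.Ico 0 (2 * Real.pi)))
    (hZ' : ∀ t, deriv Z t ≠ 0) :
    ∃ F : ℝ → ℝ → ℂ,
      Continuous (Function.uncurry F) ∧
      (∀ s t : ℝ, Complex.exp (Complex.I * s) ≠ Complex.exp (Complex.I * t) →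
        F s t = (Complex.exp (Complex.I * s) - Complex.exp (Complex.I * t)) / (Z s - Z t)) ∧
      (∀ t : ℝ, F t t = Complex.I * Complex.exp (Complex.I * t) / deriv Z t) ∧
      (∀ s t : ℝ, F s t ≠ 0) := by
  have h2π : (0 : ℝ) < 2 * Real.pi := by positivity
  -- if Z agrees at two points they differ by a multiple of the period
  have hmod : ∀ a b : ℝ, Z a = Z b → ∃ k : ℤ, a = b + k * (2 * Real.pi) := by
    intro a b hab
    have hZmod : ∀ x : ℝ, Z (toIcoMod h2π 0 x) = Z x := by
      intro x
      have hx : toIcoMod h2π 0 x = x - toIcoDiv h2π 0 x • (2 * Real.pi) := by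
        have := toIcoMod_sub_self h2π 0 x
        linarith [this, (neg_zsmul (2*Real.pi) (toIcoDiv h2π 0 x))]
      rw [hx]
      exact hper.sub_zsmul_eq _
    have ha := toIcoMod_mem_Ico' h2π a
    have hb := toIcoMod_mem_Ico' h2π b
    have heq : toIcoMod h2π 0 a = toIcoMod h2π 0 b :=
      hinj ha hb (by rw [hZmod a, hZmod b, hab])
    obtain ⟨n, hn⟩ := (toIcoMod_eq_toIcoMod h2π).mp heq
    refine ⟨-n, ?_⟩
    have : b - a = n • (2 * Real.pi) := hn
    rw [zsmul_eq_mul] at this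
    push_cast
    linarith
  -- exp separates → Z separates
  have hZne : ∀ s t : ℝ,
      Complex.exp (Complex.I * s) ≠ Complex.exp (Complex.I * t) → Z s ≠ Z t := by
    intro s t h hZst
    obtain ⟨k, hk⟩ := hmod s t hZst
    exact h (exp_I_eq_iff.mpr ⟨k, hk⟩)
  -- the complex exponential curve
  set E : ℝ → ℂ := fun x => Complex.exp (Complex.I * x) with hEdef
  have hE : ContDiff ℝ 1 E := by
    have h1 : ContDiff ℝ 1 fun x : ℝ => (Complex.I * x : ℂ) :=
      contDiff_const.mul Complex.ofRealCLM.contDiff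
    exact h1.cexp
  have hEderiv : ∀ t : ℝ, deriv E t = Complex.I * Complex.exp (Complex.I * t) := by
    intro t
    have h1 : HasDerivAt (fun x : ℝ => (Complex.I * x : ℂ)) Complex.I t := by
      have h0 : HasDerivAt (fun x : ℝ => (x : ℂ)) 1 t := by
        simpa using (hasDerivAt_id t).ofReal_comp
      simpa using h0.const_mul Complex.I
    have h2 : HasDerivAt E (Complex.exp (Complex.I * t) * Complex.I) t := h1.cexp
    rw [h2.deriv]; ring
  -- the kernel
  set F : ℝ → ℝ → ℂ := fun s t =>
    if Complex.exp (Complex.I * s) = Complex.exp (Complex.I * t) then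
      Complex.I * Complex.exp (Complex.I * t) / deriv Z t
    else (Complex.exp (Complex.I * s) - Complex.exp (Complex.I * t)) / (Z s - Z t) with hFdef
  have hFoff : ∀ s t : ℝ, Complex.exp (Complex.I * s) ≠ Complex.exp (Complex.I * t) →
      F s t = (Complex.exp (Complex.I * s) - Complex.exp (Complex.I * t)) / (Z s - Z t) := by
    intro s t h; simp only [hFdef, if_neg h]
  have hFdiag : ∀ t : ℝ, F t t = Complex.I * Complex.exp (Complex.I * t) / deriv Z t := by
    intro t; simp only [hFdef, if_pos rfl]
  -- nonvanishing of kD Z on the strip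
  have hkDZ : ∀ s t : ℝ, |s - t| < 2 * Real.pi → kD Z s t ≠ 0 := by
    intro s t hst
    by_cases hd : s = t
    · subst hd; rw [kD_diag]; exact hZ' s
    · intro h0
      have hne : Z s ≠ Z t := by
        intro hZst
        obtain ⟨k, hk⟩ := hmod s t hZst
        have hk0 : k ≠ 0 := by
          intro h; rw [h] at hk; simp at hk; exact hd (by linarith)
        have : (1 : ℝ) ≤ |(k : ℝ)| := by
          rw [← Int.cast_abs]; exact_mod_cast Int.one_le_abs hk0
        have habs : |s - t| = |(k : ℝ)| * (2 * Real.pi) := by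
          rw [hk, add_sub_cancel_left, abs_mul, abs_of_pos h2π]
        nlinarith [abs_nonneg ((k:ℝ))]
      have heq := kD_eq Z hZ s t
      rw [h0, mul_zero] at heq
      exact hne (sub_eq_zero.mp heq.symm)
  -- continuity
  have hcont : Continuous (Function.uncurry F) := by
    rw [continuous_iff_continuousAt]
    rintro ⟨s₀, t₀⟩
    by_cases h : Complex.exp (Complex.I * s₀) = Complex.exp (Complex.I * t₀)
    · -- near the (generalized) diagonal
      obtain ⟨k, hk⟩ := exp_I_eq_iff.mp h
      set G : ℝ × ℝ → ℂ :=
        fun p => kD E (p.1 - k * (2 * Real.pi)) p.2 / kD Z (p.1 - k * (2 * Real.pi)) p.2 with hGdef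
      set V : Set (ℝ × ℝ) := {p | |p.1 - p.2 - k * (2 * Real.pi)| < 2 * Real.pi} with hVdef
      have hVopen : IsOpen V := by
        have : Continuous fun p : ℝ × ℝ => |p.1 - p.2 - k * (2 * Real.pi)| := by fun_prop
        exact isOpen_lt this continuous_const
      have hp₀V : (s₀, t₀) ∈ V := by
        have h0 : s₀ - t₀ - k * (2 * Real.pi) = 0 := by rw [hk]; ring
        simp only [hVdef, Set.mem_setOf_eq, h0, abs_zero]
        exact h2π
      have hGcont : ContinuousAt G (s₀, t₀) := by
        have hmap : Continuous fun p : ℝ × ℝ => (p.1 - (k : ℝ) * (2 * Real.pi), p.2) := by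
          fun_prop
        have hnum : Continuous fun p : ℝ × ℝ => kD E (p.1 - k * (2 * Real.pi)) p.2 :=
          (kD_cont E hE).comp hmap
        have hden : Continuous fun p : ℝ × ℝ => kD Z (p.1 - k * (2 * Real.pi)) p.2 :=
          (kD_cont Z hZ).comp hmap
        apply hnum.continuousAt.div hden.continuousAt
        have : s₀ - k * (2 * Real.pi) = t₀ := by linarith [hk]
        rw [this, kD_diag]
        exact hZ' t₀
      have hFG : ∀ p ∈ V, Function.uncurry F p = G p := by
        rintro ⟨s, t⟩ hp
        simp only [hVdef, Set.mem_setOf_eq] at hp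
        set s' := s - k * (2 * Real.pi) with hs'
        have hss' : s = s' + k * (2 * Real.pi) := by rw [hs']; ring
        have hexp : Complex.exp (Complex.I * s) = Complex.exp (Complex.I * s') := by
          rw [hss']
          have h := exp_I_periodic s' k
          push_cast at h ⊢
          exact h
        have hZs : Z s = Z s' := by
          rw [hss']
          simpa [zsmul_eq_mul] using
            (hper.sub_zsmul_eq (x := s' + k * (2 * Real.pi)) k).symm
        by_cases hd : s' = t
        · have hde : Complex.exp (Complex.I * s) = Complex.exp (Complex.I * t) := by
            rw [hexp, hd]
          simp only [Function.uncurry, hFdef, if_pos hde, hGdef]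
          rw [← hs', hd, kD_diag, kD_diag, hEderiv]
        · have hne : Complex.exp (Complex.I * s') ≠ Complex.exp (Complex.I * t) := by
            intro hc
            obtain ⟨m, hm⟩ := exp_I_eq_iff.mp hc
            have hm0 : m ≠ 0 := by
              intro hm0; rw [hm0] at hm; simp at hm; exact hd (by linarith)
            have h1 : (1 : ℝ) ≤ |(m : ℝ)| := by
              rw [← Int.cast_abs]; exact_mod_cast Int.one_le_abs hm0
            have habs : |s - t - k * (2 * Real.pi)| = |(m : ℝ)| * (2 * Real.pi) := by
              have he : s - t - k * (2 * Real.pi) = s' - t := by rw [hs']; ring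
              rw [he, hm, add_sub_cancel_left, abs_mul, abs_of_pos h2π]
            nlinarith
          have hde : Complex.exp (Complex.I * s) ≠ Complex.exp (Complex.I * t) := by
            rw [hexp]; exact hne
          have hδ : ((s' : ℂ) - t) ≠ 0 := by
            intro hc
            exact hd (by exact_mod_cast sub_eq_zero.mp hc)
          have hkZ : kD Z s' t ≠ 0 := by
            apply hkDZ s' t
            have he : s' - t = s - t - k * (2 * Real.pi) := by rw [hs']; ring
            rw [he]; exact hp
          have hkE := kD_eq E hE s' t
          simp only [hEdef] at hkE
          simp only [Function.uncurry, hFdef, if_neg hde, hGdef, ← hs']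
          rw [hexp, hZs, ← hkE, ← kD_eq Z hZ s' t, mul_div_mul_left _ _ hδ]
      exact hGcont.congr
        (Filter.eventuallyEq_of_mem (hVopen.mem_nhds hp₀V) hFG).symm
    · -- off the diagonal
      set U : Set (ℝ × ℝ) :=
        {p | Complex.exp (Complex.I * p.1) ≠ Complex.exp (Complex.I * p.2)} with hUdef
      have hUopen : IsOpen U := by
        have hc1 : Continuous fun p : ℝ × ℝ => Complex.exp (Complex.I * p.1) := by fun_prop
        have hc2 : Continuous fun p : ℝ × ℝ => Complex.exp (Complex.I * p.2) := by fun_prop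
        exact isOpen_compl_iff.mpr (isClosed_eq hc1 hc2)
      have hp₀U : (s₀, t₀) ∈ U := h
      have hQcont : ContinuousAt (fun p : ℝ × ℝ =>
          (Complex.exp (Complex.I * p.1) - Complex.exp (Complex.I * p.2)) / (Z p.1 - Z p.2))
          (s₀, t₀) := by
        apply ContinuousAt.div
        · fun_prop
        · exact ((hZ.continuous.comp continuous_fst).sub
            (hZ.continuous.comp continuous_snd)).continuousAt
        · exact sub_ne_zero.mpr (hZne s₀ t₀ h)
      refine hQcont.congr (Filter.eventuallyEq_of_mem (hUopen.mem_nhds hp₀U) ?_).symm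
      rintro ⟨s, t⟩ hp
      simp only [Function.uncurry, hFdef, if_neg hp]
  refine ⟨F, hcont, hFoff, hFdiag, ?_⟩
  intro s t
  by_cases h : Complex.exp (Complex.I * s) = Complex.exp (Complex.I * t)
  · have hFst : F s t = Complex.I * Complex.exp (Complex.I * t) / deriv Z t := by
      simp only [hFdef]; rw [if_pos h]
    rw [hFst]
    exact div_ne_zero (mul_ne_zero Complex.I_ne_zero (Complex.exp_ne_zero _)) (hZ' t)
  · rw [hFoff s t h]
    exact div_ne_zero (sub_ne_zero.mpr h) (sub_ne_zero.mpr (hZne s t h))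
end
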